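/- Let a, b, c be positive integers with γ·b ≥ max(γ²·a, c) where γ = 3000. Then ΔΦ := f((a+b+1)/a) + f((a+b+1)/b) + f((a+b+c+2)/(a+b+1)) + f((a+b+c+2)/c) − f((a+b+c+2)/a) − f((a+b+c+2)/(b+c+1)) − f((b+c+1)/b) − f((b+c+1)/c) is at most an absolute constant C (independent of a,b,c). -/

import Mathlib

noncomputable def f (x : ℝ) : ℝ := Real.logb 2 x / (Real.logb 2 (2 + Real.logb 2 x)) ^ 2

noncomputable def gAux (L : ℝ) : ℝ := L / (Real.log (2 + L)) ^ 2

lemma log_lower {u : ℝ} (hu : 2 ≤ u) : 2 * u - Real.exp 1 ≤ u * Real.log u := by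
  have hu0 : (0:ℝ) < u := by linarith
  have h := Real.log_le_sub_one_of_pos (x := Real.exp 1 / u) (by positivity)
  rw [Real.log_div (Real.exp_pos 1).ne' hu0.ne', Real.log_exp] at h
  have h2 : 2 - Real.exp 1 / u ≤ Real.log u := by linarith
  have h3 := mul_le_mul_of_nonneg_left h2 hu0.le
  have heq : u * (2 - Real.exp 1 / u) = 2 * u - Real.exp 1 := by
    field_simp
  rw [heq] at h3
  linarith

lemma key_ineq {L : ℝ} (hL : 0 ≤ L) : 2 * L < (2 + L) * Real.log (2 + L) := by
  have h := log_lower (u := 2 + L) (by linarith)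
  have he : Real.exp 1 < 4 := by
    have := Real.exp_one_lt_d9; linarith
  linarith

lemma gAux_mono : StrictMonoOn gAux (Set.Ici 0) := by
  have hlogpos : ∀ x : ℝ, 0 ≤ x → 0 < Real.log (2 + x) := by
    intro x hx
    apply Real.log_pos; linarith
  apply strictMonoOn_of_deriv_pos (convex_Ici 0)
  · apply ContinuousOn.div continuousOn_id
    · apply ContinuousOn.pow
      apply ContinuousOn.log
      · fun_prop
      · intro x hx
        have : (0:ℝ) ≤ x := hx
        positivity
    · intro x hx
      exact pow_ne_zero 2 (hlogpos x hx).ne'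
  · intro x hx
    rw [interior_Ici] at hx
    have hx0 : (0:ℝ) < x := hx
    have h2x : (0:ℝ) < 2 + x := by linarith
    have hD : 0 < Real.log (2 + x) := hlogpos x hx0.le
    have h1 : HasDerivAt (fun L : ℝ => Real.log (2 + L)) (1 / (2 + x)) x := by
      have hb : HasDerivAt (fun L : ℝ => 2 + L) 1 x := (hasDerivAt_id x).const_add 2
      have := (Real.hasDerivAt_log h2x.ne').comp x hb
      simpa [one_div, Function.comp_def] using this
    have h2 : HasDerivAt (fun L : ℝ => (Real.log (2 + L)) ^ 2)
        (2 * Real.log (2 + x) * (1 / (2 + x))) x := by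
      have := h1.pow 2
      simpa [Pi.pow_def, mul_comm, mul_assoc, mul_left_comm] using this
    have h3 : HasDerivAt gAux
        ((1 * (Real.log (2 + x)) ^ 2 - x * (2 * Real.log (2 + x) * (1 / (2 + x)))) /
          ((Real.log (2 + x)) ^ 2) ^ 2) x := by
      exact (hasDerivAt_id x).div h2 (pow_ne_zero 2 hD.ne')
    rw [h3.deriv]
    have hkey := key_ineq hx0.le
    apply div_pos
    · have : x * (2 * Real.log (2 + x) * (1 / (2 + x)))
          = (2 * x) * Real.log (2 + x) / (2 + x) := by ring
      rw [this, one_mul, sub_pos, div_lt_iff₀ h2x]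
      nlinarith [hkey, hD]
    · positivity

lemma f_eq (x : ℝ) : f x = (Real.log 2) ^ 2 * gAux (Real.logb 2 x) := by
  unfold f gAux Real.logb
  rw [div_pow, div_div_eq_mul_div]
  ring

lemma f_mono {x y : ℝ} (hx : 1 ≤ x) (hxy : x ≤ y) : f x ≤ f y := by
  rw [f_eq, f_eq]
  have h1 : (0:ℝ) ≤ Real.logb 2 x := Real.logb_nonneg one_lt_two hx
  have h2 : Real.logb 2 x ≤ Real.logb 2 y :=
    Real.logb_le_logb_of_le one_lt_two (by linarith) hxy
  exact mul_le_mul_of_nonneg_left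
    (gAux_mono.monotoneOn h1 (le_trans h1 h2) h2) (sq_nonneg _)

lemma f_nonneg {x : ℝ} (hx : 1 ≤ x) : 0 ≤ f x := by
  unfold f
  exact div_nonneg (Real.logb_nonneg one_lt_two hx) (sq_nonneg _)

lemma D_ge_one {x : ℝ} (hx : 1 ≤ x) : 1 ≤ Real.logb 2 (2 + Real.logb 2 x) := by
  have h1 : (0:ℝ) ≤ Real.logb 2 x := Real.logb_nonneg one_lt_two hx
  have : Real.logb 2 2 ≤ Real.logb 2 (2 + Real.logb 2 x) :=
    Real.logb_le_logb_of_le one_lt_two (by norm_num) (by linarith)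
  simpa using this

lemma f_le_logb {x : ℝ} (hx : 1 ≤ x) : f x ≤ Real.logb 2 x := by
  unfold f
  apply div_le_self (Real.logb_nonneg one_lt_two hx)
  have := D_ge_one hx
  nlinarith

lemma f_shift {x k : ℝ} (hx : 1 ≤ x) (hk : 1 ≤ k) :
    f (k * x) ≤ f x + Real.logb 2 k := by
  have hx0 : (0:ℝ) < x := by linarith
  have hk0 : (0:ℝ) < k := by linarith
  have hLx : (0:ℝ) ≤ Real.logb 2 x := Real.logb_nonneg one_lt_two hx
  have hLk : (0:ℝ) ≤ Real.logb 2 k := Real.logb_nonneg one_lt_two hk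
  have hmul : Real.logb 2 (k * x) = Real.logb 2 k + Real.logb 2 x :=
    Real.logb_mul hk0.ne' hx0.ne'
  have hDx : 1 ≤ Real.logb 2 (2 + Real.logb 2 x) := D_ge_one hx
  have hDkx : Real.logb 2 (2 + Real.logb 2 x) ≤ Real.logb 2 (2 + Real.logb 2 (k * x)) := by
    apply Real.logb_le_logb_of_le one_lt_two (by linarith)
    rw [hmul]; linarith
  unfold f
  rw [hmul]
  have hDkx1 : 1 ≤ Real.logb 2 (2 + (Real.logb 2 k + Real.logb 2 x)) := by
    rw [hmul] at hDkx; linarith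
  set Dk := Real.logb 2 (2 + (Real.logb 2 k + Real.logb 2 x)) with hDk
  set Dx := Real.logb 2 (2 + Real.logb 2 x) with hDx'
  rw [hmul] at hDkx
  have h1 : (Real.logb 2 k + Real.logb 2 x) / Dk ^ 2
      = Real.logb 2 x / Dk ^ 2 + Real.logb 2 k / Dk ^ 2 := by ring
  rw [h1]
  have h2 : Real.logb 2 x / Dk ^ 2 ≤ Real.logb 2 x / Dx ^ 2 :=
    div_le_div_of_nonneg_left hLx (by positivity) (by nlinarith)
  have h3 : Real.logb 2 k / Dk ^ 2 ≤ Real.logb 2 k :=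
    div_le_self hLk (by nlinarith)
  linarith

theorem stmt_11 : ∃ C : ℝ, ∀ a b c : ℝ,
    (∃ a' : ℕ, 0 < a' ∧ a = a') → (∃ b' : ℕ, 0 < b' ∧ b = b') → (∃ c' : ℕ, 0 < c' ∧ c = c') →
    (3000 : ℝ) * b ≥ max ((3000 : ℝ) ^ 2 * a) c →
    f ((a + b + 1) / a) + f ((a + b + 1) / b) + f ((a + b + c + 2) / (a + b + 1)) +
      f ((a + b + c + 2) / c) - f ((a + b + c + 2) / a) -
      f ((a + b + c + 2) / (b + c + 1)) - f ((b + c + 1) / b) - f ((b + c + 1) / c) ≤ C := by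
  refine ⟨3, ?_⟩
  rintro a b c ⟨a', ha', rfl⟩ ⟨b', hb', rfl⟩ ⟨c', hc', rfl⟩ hmax
  set a : ℝ := (a' : ℝ)
  set b : ℝ := (b' : ℝ)
  set c : ℝ := (c' : ℝ)
  have ha : 1 ≤ a := by
    show (1:ℝ) ≤ (a' : ℝ)
    exact_mod_cast ha'
  have hb : 1 ≤ b := by
    show (1:ℝ) ≤ (b' : ℝ)
    exact_mod_cast hb'
  have hc : 1 ≤ c := by
    show (1:ℝ) ≤ (c' : ℝ)
    exact_mod_cast hc'
  have hab : a ≤ b := by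
    have h1 : (3000:ℝ) ^ 2 * a ≤ 3000 * b := le_trans (le_max_left _ _) hmax
    nlinarith
  have ha0 : (0:ℝ) < a := by linarith
  have hb0 : (0:ℝ) < b := by linarith
  have hc0 : (0:ℝ) < c := by linarith
  have h1 : f ((a + b + 1) / a) ≤ f ((a + b + c + 2) / a) := by
    apply f_mono
    · rw [le_div_iff₀ ha0]; linarith
    · rw [div_le_div_iff₀ ha0 ha0]; nlinarith
  have h2 : f ((a + b + 1) / b) ≤ 2 := by
    have harg : (1:ℝ) ≤ (a + b + 1) / b := by rw [le_div_iff₀ hb0]; linarith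
    have := f_le_logb harg
    have hle : (a + b + 1) / b ≤ 4 := by rw [div_le_iff₀ hb0]; linarith
    have h4 : Real.logb 2 ((a + b + 1) / b) ≤ Real.logb 2 4 :=
      Real.logb_le_logb_of_le one_lt_two (by linarith) hle
    have hl4 : Real.logb 2 4 = 2 := by
      rw [show (4:ℝ) = 2 ^ (2:ℕ) by norm_num, Real.logb_pow]
      simp
    linarith
  have h3 : f ((a + b + c + 2) / (a + b + 1)) ≤ f ((b + c + 1) / b) := by
    apply f_mono
    · rw [le_div_iff₀ (by linarith : (0:ℝ) < a + b + 1)]; linarith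
    · rw [div_le_div_iff₀ (by linarith) hb0]; nlinarith
  have h4 : f ((a + b + c + 2) / c) ≤ f ((b + c + 1) / c) + 1 := by
    have hbc0 : (0:ℝ) < b + c + 1 := by linarith
    have hk : (1:ℝ) ≤ (a + b + c + 2) / (b + c + 1) := by
      rw [le_div_iff₀ hbc0]; linarith
    have hx : (1:ℝ) ≤ (b + c + 1) / c := by rw [le_div_iff₀ hc0]; linarith
    have hprod : (a + b + c + 2) / (b + c + 1) * ((b + c + 1) / c)
        = (a + b + c + 2) / c := by
      field_simp
    have hsh := f_shift hx hk
    rw [hprod] at hsh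
    have hk2 : (a + b + c + 2) / (b + c + 1) ≤ 2 := by
      rw [div_le_iff₀ hbc0]; linarith
    have hlogk : Real.logb 2 ((a + b + c + 2) / (b + c + 1)) ≤ 1 := by
      have := Real.logb_le_logb_of_le one_lt_two (by linarith) hk2
      simpa using this
    linarith
  have h5 : 0 ≤ f ((a + b + c + 2) / (b + c + 1)) := by
    apply f_nonneg
    rw [le_div_iff₀ (by linarith : (0:ℝ) < b + c + 1)]; linarith
  linarith
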